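/- Uniqueness part: if h₁ and h₂ are Puiseux series both satisfying q·(G ∘ hᵢ) = hᵢ'·G with the same initial term c·x^q (c ≠ 0, q > 0), where G has valuation 1, then h₁ = h₂. -/

import Mathlib

open HahnSeries

noncomputable section

abbrev Khat := HahnSeries ℚ ℂ

/-- A Hahn series is a Puiseux series if its support lies in `(1/d)ℤ` for some `d ≥ 1`. -/
def IsPuiseux (f : Khat) : Prop :=
  ∃ d : ℕ, 0 < d ∧ ∀ q ∈ f.support, ∃ n : ℤ, q = (n : ℚ) / d

/-- Formal derivative of a Hahn/Puiseux series. -/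
def D (f : Khat) : Khat where
  coeff q := ((q + 1 : ℚ) : ℂ) * f.coeff (q + 1)
  isPWO_support' := by
    have hsub : (Function.support fun q : ℚ => ((q + 1 : ℚ) : ℂ) * f.coeff (q + 1)) ⊆
        (fun q : ℚ => q - 1) '' f.support := by
      intro q hq
      have : f.coeff (q + 1) ≠ 0 := by
        intro h0
        apply hq
        simp [h0]
      exact ⟨q + 1, this, by ring⟩
    exact (Set.IsPWO.image_of_monotone f.isPWO_support
      (fun a b hab => by simpa using sub_le_sub_right hab 1)).mono hsub

/-- Formal integral of a Hahn/Puiseux series (dropping any `x⁻¹` term). -/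
def integ (f : Khat) : Khat where
  coeff q := if q = 0 then 0 else f.coeff (q - 1) / ((q : ℚ) : ℂ)
  isPWO_support' := by
    have hsub : (Function.support fun q : ℚ => if q = 0 then 0 else f.coeff (q - 1) / ((q : ℚ) : ℂ)) ⊆
        (fun q : ℚ => q + 1) '' f.support := by
      intro q hq
      simp only [Function.mem_support] at hq
      by_cases h0 : q = 0
      · simp [h0] at hq
      · have : f.coeff (q - 1) ≠ 0 := by
          intro h; simp [h0, h] at hq
        exact ⟨q - 1, this, by ring⟩
    exact (Set.IsPWO.image_of_monotone f.isPWO_support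
      (fun a b hab => by simpa using add_le_add_right hab 1)).mono hsub

/-- Composition `F ∘ h` of a power series `F` with a Hahn series `h` of positive order. -/
def hcomp (F : PowerSeries ℂ) (h : Khat) : Khat :=
  if hh : 0 < h.orderTop then
    HahnSeries.SummableFamily.hsum
      { toFun := fun n => (PowerSeries.coeff n F) • h ^ n
        isPWO_iUnion_support' := by
          refine ((HahnSeries.SummableFamily.powers h).isPWO_iUnion_support).mono ?_
          refine Set.iUnion_mono fun n => ?_
          intro q hq
          simp only [HahnSeries.mem_support, HahnSeries.coeff_smul] at hq ⊢
          intro h0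
          simp only [HahnSeries.SummableFamily.powers_of_orderTop_pos hh] at h0
          exact hq (by rw [h0, smul_zero])
        finite_co_support' := fun g => by
          refine ((HahnSeries.SummableFamily.powers h).finite_co_support g).subset ?_
          intro n hn
          simp only [Set.mem_setOf_eq, HahnSeries.coeff_smul, ne_eq] at hn ⊢
          intro h0
          simp only [HahnSeries.SummableFamily.powers_of_orderTop_pos hh] at h0
          exact hn (by rw [h0, smul_zero]) }
  else 0

/-- The embedding of power series into Hahn series over `ℚ`. -/
def ofPS : PowerSeries ℂ →+* Khat := HahnSeries.ofPowerSeries ℚ ℂ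

/-- Logarithmic derivative. -/
def ld (u : Khat) : Khat := D u / u

end

namespace PuiseuxUniq
open HahnSeries Finset

/-- All coefficients strictly below `a` vanish. -/
def Below (a : ℚ) (x : Khat) : Prop := ∀ s : ℚ, s < a → x.coeff s = 0

lemma below_of_orderTop {a : ℚ} {x : Khat} (h : (a : WithTop ℚ) ≤ x.orderTop) :
    Below a x := fun s hs =>
  HahnSeries.coeff_eq_zero_of_lt_orderTop (lt_of_lt_of_le (by exact_mod_cast hs) h)

lemma Below.mono {a b : ℚ} {x : Khat} (hab : a ≤ b) (h : Below b x) : Below a x :=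
  fun s hs => h s (lt_of_lt_of_le hs hab)

lemma Below.mul {a b : ℚ} {x y : Khat} (hx : Below a x) (hy : Below b y) :
    Below (a + b) (x * y) := by
  intro s hs
  rw [HahnSeries.coeff_mul]
  refine Finset.sum_eq_zero fun ij hij => ?_
  rw [Finset.mem_addAntidiagonal] at hij
  by_cases h1 : ij.1 < a
  · rw [hx _ h1, zero_mul]
  · have h2 : ij.2 < b := by
      by_contra h2
      push_neg at h1 h2
      have : a + b ≤ s := hij.2.2 ▸ add_le_add h1 h2
      exact absurd this (not_le.mpr hs)
    rw [hy _ h2, mul_zero]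

lemma coeff_mul_below {a b : ℚ} {x y : Khat} (hx : Below a x) (hy : Below b y) :
    (x * y).coeff (a + b) = x.coeff a * y.coeff b := by
  rw [HahnSeries.coeff_mul]
  have hsub : Finset.antidiagonal x.isPWO_support y.isPWO_support (a + b) ⊆ {(a, b)} := by
    intro ij hij
    rw [Finset.mem_addAntidiagonal] at hij
    have h1 : a ≤ ij.1 := by
      by_contra h; push_neg at h; exact hij.1 (hx _ h)
    have h2 : b ≤ ij.2 := by
      by_contra h; push_neg at h; exact hij.2.1 (hy _ h)
    have e1 : ij.1 = a := by
      by_contra h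
      have : a < ij.1 := lt_of_le_of_ne h1 (Ne.symm h)
      have : a + b < ij.1 + ij.2 := add_lt_add_of_lt_of_le this h2
      rw [hij.2.2] at this
      exact lt_irrefl _ this
    have e2 : ij.2 = b := by
      have := hij.2.2
      rw [e1] at this
      linarith
    simp [Prod.ext_iff, e1, e2]
  rw [Finset.sum_subset hsub, Finset.sum_singleton]
  intro ij hij hnot
  rw [Finset.mem_singleton] at hij
  subst hij
  by_cases hxa : x.coeff a = 0
  · rw [hxa, zero_mul]
  · have hyb : y.coeff b = 0 := by
      by_contra hyb
      exact hnot (Finset.mem_addAntidiagonal.mpr ⟨hxa, hyb, rfl⟩)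
    rw [hyb, mul_zero]

lemma Below.pow {a : ℚ} {x : Khat} (ha : 0 ≤ a) (hx : Below a x) (n : ℕ) :
    Below ((n : ℚ) * a) (x ^ n) := by
  induction n with
  | zero =>
    intro s hs
    simp only [Nat.cast_zero, zero_mul] at hs
    rw [pow_zero]
    rw [show (1 : Khat) = HahnSeries.single 0 1 from rfl, HahnSeries.coeff_single_of_ne (ne_of_lt hs)]
  | succ n ih =>
    have := ih.mul hx
    refine this.mono (le_of_eq ?_) |>.mono (le_refl _)
    push_cast
    ring

lemma below_sum {ι : Type*} {a : ℚ} {s : Finset ι} {f : ι → Khat}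
    (h : ∀ i ∈ s, Below a (f i)) : Below a (∑ i ∈ s, f i) := by
  classical
  induction s using Finset.induction_on with
  | empty => intro t ht; simp
  | insert _ _ hnotmem ih =>
    rw [Finset.sum_insert hnotmem]
    intro t ht
    rw [HahnSeries.coeff_add, h _ (Finset.mem_insert_self _ _) t ht,
      ih (fun i hi => h i (Finset.mem_insert_of_mem hi)) t ht, add_zero]

end PuiseuxUniq

/-- uniqueness — two Puiseux solutions of `q·(G∘h) = h'·G` with the same
initial term `c·x^q` (i.e. `v(h - c·x^q) > q`) coincide. -/
theorem puiseux_solution_unique (G : PowerSeries ℂ)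
    (hG0 : PowerSeries.coeff 0 G = 0) (hG1 : PowerSeries.coeff 1 G ≠ 0)
    (q : ℚ) (hq : 0 < q) (c : ℂ) (hc : c ≠ 0) (h₁ h₂ : Khat)
    (hp₁ : IsPuiseux h₁) (hp₂ : IsPuiseux h₂)
    (hinit₁ : (q : WithTop ℚ) < (h₁ - HahnSeries.single q c).orderTop)
    (hinit₂ : (q : WithTop ℚ) < (h₂ - HahnSeries.single q c).orderTop)
    (heq₁ : (q : ℂ) • hcomp G h₁ = D h₁ * ofPS G)
    (heq₂ : (q : ℂ) • hcomp G h₂ = D h₂ * ofPS G) :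
    h₁ = h₂ := by
  classical
  by_contra hne
  set e : Khat := h₁ - h₂ with he
  have he0 : e ≠ 0 := sub_ne_zero.mpr hne
  set r : ℚ := e.order with hr
  have hercoeff : e.coeff r ≠ 0 := mt HahnSeries.coeff_order_eq_zero.mp he0
  have heOT : e.orderTop = (r : WithTop ℚ) := (HahnSeries.order_eq_orderTop_of_ne_zero he0).symm
  have hqr : q < r := by
    have hmin : (q : WithTop ℚ) < e.orderTop := by
      have hsub : (h₁ - HahnSeries.single q c) - (h₂ - HahnSeries.single q c) = e := by
        rw [he]; ring
      calc (q : WithTop ℚ) < min (h₁ - HahnSeries.single q c).orderTop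
            (h₂ - HahnSeries.single q c).orderTop := lt_min hinit₁ hinit₂
        _ ≤ e.orderTop := by
            rw [← hsub]; exact HahnSeries.min_orderTop_le_orderTop_sub
    rw [heOT] at hmin
    exact_mod_cast hmin
  have hbe : PuiseuxUniq.Below r e := PuiseuxUniq.below_of_orderTop (le_of_eq heOT.symm)
  have hot : ∀ h : Khat, (q : WithTop ℚ) < (h - HahnSeries.single q c).orderTop →
      h.orderTop = (q : WithTop ℚ) := by
    intro h hinit
    rw [show h = HahnSeries.single q c + (h - HahnSeries.single q c) by ring,
      HahnSeries.orderTop_add_eq_left, HahnSeries.orderTop_single hc]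
    rw [HahnSeries.orderTop_single hc]
    exact hinit
  have hot1 := hot h₁ hinit₁
  have hot2 := hot h₂ hinit₂
  have hpos1 : 0 < h₁.orderTop := by rw [hot1]; exact_mod_cast hq
  have hpos2 : 0 < h₂.orderTop := by rw [hot2]; exact_mod_cast hq
  have hbq1 : PuiseuxUniq.Below q h₁ := PuiseuxUniq.below_of_orderTop (le_of_eq hot1.symm)
  have hbq2 : PuiseuxUniq.Below q h₂ := PuiseuxUniq.below_of_orderTop (le_of_eq hot2.symm)
  have hkey : ∀ (h : Khat) (hh : 0 < h.orderTop),
      (hcomp G h).coeff r = ∑ᶠ n : ℕ, (PowerSeries.coeff n G) * (h ^ n).coeff r := by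
    intro h hh
    unfold hcomp
    rw [dif_pos hh, HahnSeries.SummableFamily.coeff_hsum]
    refine finsum_congr fun n => ?_
    show ((PowerSeries.coeff n G) • h ^ n).coeff r = _
    rw [HahnSeries.coeff_smul, smul_eq_mul]
  have hfin : ∀ (h : Khat) (hh : 0 < h.orderTop),
      (Function.support fun n : ℕ => (PowerSeries.coeff n G) * (h ^ n).coeff r).Finite := by
    intro h hh
    refine ((HahnSeries.SummableFamily.powers h).finite_co_support r).subset ?_
    intro n hn
    simp only [Function.mem_support, ne_eq] at hn
    simp only [Set.mem_setOf_eq, HahnSeries.SummableFamily.powers_of_orderTop_pos hh]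
    intro h0
    exact hn (mul_eq_zero.mpr (Or.inr h0))
  have hdiff : (hcomp G h₁).coeff r - (hcomp G h₂).coeff r
      = (PowerSeries.coeff 1 G) * e.coeff r := by
    rw [hkey h₁ hpos1, hkey h₂ hpos2, ← finsum_sub_distrib (hfin h₁ hpos1) (hfin h₂ hpos2)]
    rw [finsum_eq_single _ 1]
    · rw [pow_one, pow_one, ← mul_sub, ← HahnSeries.coeff_sub, ← he]
    · intro n hn
      match n, hn with
      | 0, _ => simp
      | 1, h => exact absurd rfl h
      | (m+2), _ =>
        have hgeom : h₁ ^ (m+2) - h₂ ^ (m+2)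
            = (∑ i ∈ Finset.range (m+2), h₁ ^ i * h₂ ^ (m + 2 - 1 - i)) * (h₁ - h₂) :=
          (geom_sum₂_mul h₁ h₂ (m+2)).symm
        have hS : PuiseuxUniq.Below (((m:ℚ)+1) * q)
            (∑ i ∈ Finset.range (m+2), h₁ ^ i * h₂ ^ (m + 2 - 1 - i)) := by
          refine PuiseuxUniq.below_sum fun i hi => ?_
          rw [Finset.mem_range] at hi
          refine ((hbq1.pow hq.le i).mul (hbq2.pow hq.le (m + 2 - 1 - i))).mono (le_of_eq ?_)
          have hnat : i + (m + 2 - 1 - i) = m + 1 := by omega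
          have hcast : (i : ℚ) + ((m + 2 - 1 - i : ℕ) : ℚ) = ((m + 1 : ℕ) : ℚ) := by
            rw [← Nat.cast_add, hnat]
          rw [← add_mul, hcast]
          push_cast
          ring
        have hbig : PuiseuxUniq.Below (((m:ℚ)+1) * q + r) (h₁ ^ (m+2) - h₂ ^ (m+2)) := by
          rw [hgeom, ← he]
          exact hS.mul hbe
        have hlt : r < ((m:ℚ)+1) * q + r := by
          have : 0 < ((m:ℚ)+1) * q := by positivity
          linarith
        have h0 : (h₁ ^ (m+2)).coeff r - (h₂ ^ (m+2)).coeff r = 0 := by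
          rw [← HahnSeries.coeff_sub]
          exact hbig r hlt
        rw [← mul_sub, h0, mul_zero]
  have hDcoeff : ∀ (f : Khat) (s : ℚ), (D f).coeff s = ((s + 1 : ℚ) : ℂ) * f.coeff (s + 1) :=
    fun f s => rfl
  have hD : D h₁ - D h₂ = D e := by
    apply HahnSeries.coeff_injective
    funext s
    rw [HahnSeries.coeff_sub]
    show (D h₁).coeff s - (D h₂).coeff s = (D e).coeff s
    rw [hDcoeff, hDcoeff, hDcoeff, he, HahnSeries.coeff_sub]
    ring
  have hbD : PuiseuxUniq.Below (r - 1) (D e) := by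
    intro s hs
    rw [hDcoeff, hbe (s+1) (by linarith), mul_zero]
  have hbG : PuiseuxUniq.Below 1 (ofPS G) := by
    intro s hs
    show (HahnSeries.ofPowerSeries ℚ ℂ G).coeff s = 0
    rw [HahnSeries.ofPowerSeries_apply, HahnSeries.embDomain_notin_image_support]
    rintro ⟨n, hn, hcast⟩
    simp only [Nat.castOrderEmbedding_apply] at hcast
    have hlt1 : (n : ℚ) < 1 := hcast ▸ hs
    have hn0 : n = 0 := by
      have : n < 1 := by exact_mod_cast hlt1
      omega
    subst hn0
    rw [HahnSeries.mem_support, HahnSeries.coeff_toPowerSeries_symm] at hn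
    exact hn hG0
  have hG1coeff : (ofPS G).coeff 1 = PowerSeries.coeff 1 G := by
    have h := HahnSeries.ofPowerSeries_apply_coeff (Γ := ℚ) G 1
    show (HahnSeries.ofPowerSeries ℚ ℂ G).coeff 1 = _
    simpa using h
  have hmulcoeff : (D e * ofPS G).coeff r
      = ((r : ℚ) : ℂ) * e.coeff r * PowerSeries.coeff 1 G := by
    have h := PuiseuxUniq.coeff_mul_below hbD hbG
    rw [sub_add_cancel] at h
    rw [h, hDcoeff, sub_add_cancel, hG1coeff]
  have hEQ : (q : ℂ) • hcomp G h₁ - (q : ℂ) • hcomp G h₂ = D e * ofPS G := by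
    rw [heq₁, heq₂, ← sub_mul, hD]
  have hcoeffEq := congrArg (fun z : Khat => z.coeff r) hEQ
  simp only [HahnSeries.coeff_sub, HahnSeries.coeff_smul, smul_eq_mul] at hcoeffEq
  rw [← mul_sub, hdiff, hmulcoeff] at hcoeffEq
  have h0 : ((q : ℂ) - ((r : ℚ) : ℂ)) * (PowerSeries.coeff 1 G * e.coeff r) = 0 := by
    linear_combination hcoeffEq
  rcases mul_eq_zero.mp h0 with h0 | h0
  · have : (q : ℂ) = ((r : ℚ) : ℂ) := sub_eq_zero.mp h0
    have : q = r := by exact_mod_cast this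
    linarith
  · exact (mul_ne_zero hG1 hercoeff) h0
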